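/- For any nonempty finite sets A and B, there exists a (|B|/(4·|A|))-uniform map f : A → B. -/
import Mathlib


open BigOperators Finset

/-- A map `f : A → B` between nonempty finite sets is `ε`-uniform if
`(1/2)·Σ_{b∈B} | |f⁻¹(b)|/|A| − 1/|B| | ≤ ε`. -/
def IsUniformMap {A B : Type*} [Fintype A] [Fintype B] [DecidableEq B]
    (f : A → B) (ε : ℝ) : Prop :=
  (1 / 2) * ∑ b : B,
      |((Finset.univ.filter (fun a => f a = b)).card : ℝ) / (Fintype.card A)
        - 1 / (Fintype.card B)| ≤ ε

theorem exists_uniform_map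
    {A B : Type*} [Fintype A] [Fintype B] [DecidableEq B]
    [Nonempty A] [Nonempty B] :
    ∃ f : A → B, IsUniformMap f ((Fintype.card B : ℝ) / (4 * (Fintype.card A : ℝ))) := by
  classical
  set n := Fintype.card A with hn
  set m := Fintype.card B with hm
  have hn0 : 0 < n := Fintype.card_pos
  have hm0 : 0 < m := Fintype.card_pos
  set e := Fintype.equivFin A
  set g := Fintype.equivFin B
  refine ⟨fun a => g.symm ⟨(e a : ℕ) % m, Nat.mod_lt _ hm0⟩, ?_⟩
  set q := n / m with hq
  set r := n % m with hr
  have hrm : r < m := Nat.mod_lt _ hm0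
  have hnqr : m * q + r = n := Nat.div_add_mod n m
  -- fiber sizes
  have key : ∀ b : B, (univ.filter (fun a => g.symm ⟨(e a : ℕ) % m, Nat.mod_lt _ hm0⟩ = b)).card
      = q + if ((g b : Fin m) : ℕ) < r then 1 else 0 := by
    intro b
    have h1 : (univ.filter (fun a => g.symm ⟨(e a : ℕ) % m, Nat.mod_lt _ hm0⟩ = b)).card
        = ((Finset.range n).filter (fun i => i % m = ((g b : Fin m) : ℕ))).card := by
      rw [Finset.card_filter, Finset.card_filter]
      rw [Equiv.sum_comp e (fun i : Fin n =>
        if g.symm ⟨((i : ℕ)) % m, Nat.mod_lt _ hm0⟩ = b then (1:ℕ) else 0)]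
      rw [Fin.sum_univ_eq_sum_range (fun i =>
        if g.symm ⟨i % m, Nat.mod_lt _ hm0⟩ = b then (1:ℕ) else 0)]
      refine Finset.sum_congr rfl fun i hi => ?_
      congr 1
      rw [eq_iff_iff]
      constructor
      · intro h
        have : (⟨i % m, Nat.mod_lt _ hm0⟩ : Fin m) = g b := by
          rw [← h]; simp
        exact congrArg Fin.val this
      · intro h
        have : (⟨i % m, Nat.mod_lt _ hm0⟩ : Fin m) = g b := Fin.ext h
        rw [this]; simp
    rw [h1]
    have h2 : ((Finset.range n).filter (fun i => i % m = ((g b : Fin m) : ℕ))).card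
        = n.count (· ≡ ((g b : Fin m) : ℕ) [MOD m]) := by
      rw [Nat.count_eq_card_filter_range]
      congr 1
      refine Finset.filter_congr fun i hi => ?_
      unfold Nat.ModEq
      rw [Nat.mod_eq_of_lt (g b).isLt]
    rw [h2, Nat.count_modEq_card _ hm0, Nat.mod_eq_of_lt (g b).isLt]
  -- rewrite the sum
  unfold IsUniformMap
  have hnR : (0:ℝ) < n := by exact_mod_cast hn0
  have hmR : (0:ℝ) < m := by exact_mod_cast hm0
  have hnqrR : (m : ℝ) * q + r = n := by exact_mod_cast hnqr
  have hrmR : (r : ℝ) < m := by exact_mod_cast hrm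
  have hsum : ∑ b : B,
      |(((univ.filter (fun a => g.symm ⟨(e a : ℕ) % m, Nat.mod_lt _ hm0⟩ = b)).card : ℝ)) / n
        - 1 / m|
      = ∑ j ∈ Finset.range m, |((q + if j < r then 1 else 0 : ℕ) : ℝ) / n - 1 / m| := by
    rw [← Fin.sum_univ_eq_sum_range (fun j => |((q + if j < r then 1 else 0 : ℕ) : ℝ) / n - 1 / m|)]
    refine Fintype.sum_equiv g _ _ fun b => ?_
    rw [key b]
  have hsplit : ∑ j ∈ Finset.range m, |((q + if j < r then 1 else 0 : ℕ) : ℝ) / n - 1 / m|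
      = r * |((q : ℝ) + 1) / n - 1 / m| + (m - r) * |(q : ℝ) / n - 1 / m| := by
    rw [Finset.range_eq_Ico, ← Finset.sum_Ico_consecutive _ (Nat.zero_le r) hrm.le]
    have hA : ∑ j ∈ Finset.Ico 0 r, |((q + if j < r then 1 else 0 : ℕ) : ℝ) / n - 1 / m|
        = (r : ℝ) * |((q : ℝ) + 1) / n - 1 / m| := by
      rw [Finset.sum_congr rfl (fun j hj => by
        rw [if_pos (Finset.mem_Ico.mp hj).2])]
      rw [Finset.sum_const, Nat.card_Ico, Nat.sub_zero, nsmul_eq_mul]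
      push_cast; ring
    have hB : ∑ j ∈ Finset.Ico r m, |((q + if j < r then 1 else 0 : ℕ) : ℝ) / n - 1 / m|
        = ((m : ℝ) - r) * |(q : ℝ) / n - 1 / m| := by
      rw [Finset.sum_congr rfl (fun j hj => by
        rw [if_neg (not_lt.mpr (Finset.mem_Ico.mp hj).1)])]
      rw [Finset.sum_const, Nat.card_Ico, nsmul_eq_mul, Nat.cast_sub hrm.le]
      push_cast; ring
    rw [hA, hB]
  have h1 : |((q : ℝ) + 1) / n - 1 / m| = ((m : ℝ) - r) / (n * m) := by
    have : ((q : ℝ) + 1) / n - 1 / m = ((m : ℝ) - r) / (n * m) := by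
      field_simp
      linear_combination hnqrR
    rw [this, abs_of_nonneg (div_nonneg (by linarith) (by positivity))]
  have h2 : |(q : ℝ) / n - 1 / m| = (r : ℝ) / (n * m) := by
    have : (q : ℝ) / n - 1 / m = -((r : ℝ) / (n * m)) := by
      field_simp
      linear_combination hnqrR
    rw [this, abs_neg, abs_of_nonneg (by positivity)]
  have hexpand : (1/2 : ℝ) * ((r : ℝ) * (((m : ℝ) - r) / (n * m))
      + ((m : ℝ) - r) * ((r : ℝ) / (n * m))) = (r : ℝ) * ((m : ℝ) - r) / (n * m) := by
    ring
  show (1/2 : ℝ) * ∑ b : B, _ ≤ (m : ℝ) / (4 * (n : ℝ))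
  rw [hsum, hsplit, h1, h2, hexpand, div_le_div_iff₀ (by positivity) (by positivity)]
  nlinarith [sq_nonneg ((m:ℝ) - 2 * r), hnR, hmR]
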